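/- Let u(x) = 2^{-2s} √π (Γ(s+1/2) Γ(1+s))^{-1} (1 - x²)^s on Ω = (-1,1), with s ∈ (0,1). Then for every ε > 0 and every p ∈ ℕ there exist constants C_ε, γ > 0 such that ‖r^{p - 1/2 - s + ε} u^{(p)}‖_{L²(-1,1)} ≤ C_ε γ^p p!, where r(x) = dist(x, {-1,1}) = 1 - |x|. -/

import Mathlib

open MeasureTheory

/-- Exact solution of `(-Δ)^s u = 1` on `(-1,1)` with zero exterior condition. -/
noncomputable def uExact (s : ℝ) (x : ℝ) : ℝ :=
  2 ^ (-2 * s) * Real.sqrt Real.pi / (Real.Gamma (s + 1 / 2) * Real.Gamma (1 + s)) *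
    (1 - x ^ 2) ^ s

namespace ExactAux

open Set Real

/-- coefficients of derivatives of `(1-x)^s` -/
noncomputable def aseq (s : ℝ) : ℕ → ℝ
  | 0 => 1
  | k + 1 => aseq s k * ((k : ℝ) - s)

/-- coefficients of derivatives of `(1+x)^s` -/
noncomputable def bseq (s : ℝ) : ℕ → ℝ
  | 0 => 1
  | k + 1 => bseq s k * (s - (k : ℝ))

lemma abs_aseq_le (s : ℝ) (hs0 : 0 < s) (hs1 : s < 1) (k : ℕ) :
    |aseq s k| ≤ k.factorial := by
  induction k with
  | zero => simp [aseq]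
  | succ k ih =>
    have hk : (0:ℝ) ≤ (k:ℝ) := Nat.cast_nonneg k
    have h1 : |(k : ℝ) - s| ≤ (k : ℝ) + 1 := by
      rw [abs_le]; constructor <;> nlinarith
    calc |aseq s (k+1)| = |aseq s k| * |(k:ℝ) - s| := abs_mul _ _
    _ ≤ (k.factorial : ℝ) * ((k:ℝ) + 1) :=
        mul_le_mul ih h1 (abs_nonneg _) (Nat.cast_nonneg _)
    _ = ((k+1).factorial : ℝ) := by push_cast [Nat.factorial_succ]; ring

lemma abs_bseq_le (s : ℝ) (hs0 : 0 < s) (hs1 : s < 1) (k : ℕ) :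
    |bseq s k| ≤ k.factorial := by
  induction k with
  | zero => simp [bseq]
  | succ k ih =>
    have hk : (0:ℝ) ≤ (k:ℝ) := Nat.cast_nonneg k
    have h1 : |s - (k : ℝ)| ≤ (k : ℝ) + 1 := by
      rw [abs_le]; constructor <;> nlinarith
    calc |bseq s (k+1)| = |bseq s k| * |s - (k:ℝ)| := abs_mul _ _
    _ ≤ (k.factorial : ℝ) * ((k:ℝ) + 1) :=
        mul_le_mul ih h1 (abs_nonneg _) (Nat.cast_nonneg _)
    _ = ((k+1).factorial : ℝ) := by push_cast [Nat.factorial_succ]; ring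

lemma iteratedDeriv_eq_within {f : ℝ → ℝ} {s : Set ℝ} (hs : IsOpen s) {x : ℝ}
    (hx : x ∈ s) (n : ℕ) : iteratedDeriv n f x = iteratedDerivWithin n f s x := by
  rw [iteratedDeriv_eq_iteratedFDeriv, iteratedDerivWithin_eq_iteratedFDerivWithin,
    iteratedFDerivWithin_of_isOpen n hs hx]

lemma contDiffOn_fa (s : ℝ) :
    ContDiffOn ℝ ⊤ (fun y : ℝ => (1 - y) ^ s) (Set.Ioo (-1:ℝ) 1) := by
  intro x hx
  have h : (1 - x) ≠ 0 := by have := hx.2; intro h; linarith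
  exact (ContDiffAt.comp x (Real.contDiffAt_rpow_const_of_ne h)
    ((contDiff_const.sub contDiff_id).contDiffAt)).contDiffWithinAt

lemma contDiffOn_fb (s : ℝ) :
    ContDiffOn ℝ ⊤ (fun y : ℝ => (1 + y) ^ s) (Set.Ioo (-1:ℝ) 1) := by
  intro x hx
  have h : (1 + x) ≠ 0 := by have := hx.1; intro h; linarith
  exact (ContDiffAt.comp x (Real.contDiffAt_rpow_const_of_ne h)
    ((contDiff_const.add contDiff_id).contDiffAt)).contDiffWithinAt

lemma iter_fa (s : ℝ) (k : ℕ) :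
    Set.EqOn (iteratedDerivWithin k (fun y : ℝ => (1 - y) ^ s) (Set.Ioo (-1:ℝ) 1))
      (fun x => aseq s k * (1 - x) ^ (s - k)) (Set.Ioo (-1:ℝ) 1) := by
  induction k with
  | zero => intro x hx; simp [aseq]
  | succ k ih =>
    intro x hx
    have hu : UniqueDiffWithinAt ℝ (Set.Ioo (-1:ℝ) 1) x :=
      isOpen_Ioo.uniqueDiffOn x hx
    rw [iteratedDerivWithin_succ, derivWithin_of_isOpen isOpen_Ioo hx]
    have heq : iteratedDerivWithin k (fun y : ℝ => (1 - y) ^ s) (Set.Ioo (-1:ℝ) 1)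
        =ᶠ[nhds x] (fun x => aseq s k * (1 - x) ^ (s - k)) :=
      Filter.eventuallyEq_of_mem (isOpen_Ioo.mem_nhds hx) ih
    rw [heq.deriv_eq]
    have h1x : (0:ℝ) < 1 - x := by have := hx.2; linarith
    have hd : HasDerivAt (fun y : ℝ => (1 - y) ^ (s - (k:ℝ)))
        (((s - (k:ℝ)) * (1 - x) ^ (s - (k:ℝ) - 1)) * (-1)) x := by
      have h1 := Real.hasDerivAt_rpow_const (x := 1 - x) (p := s - (k:ℝ)) (Or.inl h1x.ne')
      exact HasDerivAt.comp x h1 ((hasDerivAt_id x).const_sub 1)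
    rw [(hd.const_mul (aseq s k)).deriv]
    have he : s - ((k:ℝ) + 1) = s - (k:ℝ) - 1 := by ring
    show aseq s k * ((s - (k:ℝ)) * (1 - x) ^ (s - (k:ℝ) - 1) * (-1))
        = aseq s (k+1) * (1 - x) ^ (s - ((k:ℕ)+1 : ℕ)) 
    simp only [aseq]
    push_cast
    rw [he]
    ring

lemma iter_fb (s : ℝ) (k : ℕ) :
    Set.EqOn (iteratedDerivWithin k (fun y : ℝ => (1 + y) ^ s) (Set.Ioo (-1:ℝ) 1))
      (fun x => bseq s k * (1 + x) ^ (s - k)) (Set.Ioo (-1:ℝ) 1) := by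
  induction k with
  | zero => intro x hx; simp [bseq]
  | succ k ih =>
    intro x hx
    have hu : UniqueDiffWithinAt ℝ (Set.Ioo (-1:ℝ) 1) x :=
      isOpen_Ioo.uniqueDiffOn x hx
    rw [iteratedDerivWithin_succ, derivWithin_of_isOpen isOpen_Ioo hx]
    have heq : iteratedDerivWithin k (fun y : ℝ => (1 + y) ^ s) (Set.Ioo (-1:ℝ) 1)
        =ᶠ[nhds x] (fun x => bseq s k * (1 + x) ^ (s - k)) :=
      Filter.eventuallyEq_of_mem (isOpen_Ioo.mem_nhds hx) ih
    rw [heq.deriv_eq]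
    have h1x : (0:ℝ) < 1 + x := by have := hx.1; linarith
    have hd : HasDerivAt (fun y : ℝ => (1 + y) ^ (s - (k:ℝ)))
        (((s - (k:ℝ)) * (1 + x) ^ (s - (k:ℝ) - 1)) * 1) x := by
      have h1 := Real.hasDerivAt_rpow_const (x := 1 + x) (p := s - (k:ℝ)) (Or.inl h1x.ne')
      exact HasDerivAt.comp x h1 ((hasDerivAt_id x).const_add 1)
    rw [(hd.const_mul (bseq s k)).deriv]
    have he : s - ((k:ℝ) + 1) = s - (k:ℝ) - 1 := by ring
    show bseq s k * ((s - (k:ℝ)) * (1 + x) ^ (s - (k:ℝ) - 1) * 1)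
        = bseq s (k+1) * (1 + x) ^ (s - ((k:ℕ)+1 : ℕ))
    simp only [bseq]
    push_cast
    rw [he]
    ring

lemma term_bound (s : ℝ) (hs0 : 0 < s) (hs1 : s < 1) {x : ℝ}
    (hx : x ∈ Set.Ioo (-1:ℝ) 1) (i j : ℕ) :
    (1 - x) ^ (s - (i:ℝ)) * (1 + x) ^ (s - (j:ℝ))
      ≤ 2 * (1 - |x|) ^ (s - ((i + j : ℕ) : ℝ)) := by
  obtain ⟨hx1, hx2⟩ := hx
  have hax : |x| < 1 := abs_lt.2 ⟨hx1, hx2⟩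
  set a : ℝ := 1 - x with ha_def
  set b : ℝ := 1 + x with hb_def
  set t : ℝ := 1 - |x| with ht_def
  have ha : 0 < a := by simp [ha_def]; linarith
  have hb : 0 < b := by simp [hb_def]; linarith
  have ht : 0 < t := by simp [ht_def]; linarith
  have hta : t ≤ a := by rw [ht_def, ha_def]; linarith [le_abs_self x]
  have htb : t ≤ b := by rw [ht_def, hb_def]; linarith [neg_abs_le x]
  have hab : a * b ≤ 2 * t := by
    have h1 : a * b = 1 - x ^ 2 := by ring
    have h2 : x ^ 2 = |x| ^ 2 := (sq_abs x).symm
    nlinarith [abs_nonneg x]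
  -- rewrite both sides
  have hLHS : (1 - x) ^ (s - (i:ℝ)) * (1 + x) ^ (s - (j:ℝ))
      = ((a * b) ^ s) * (a ^ i * b ^ j)⁻¹ := by
    rw [Real.rpow_sub ha, Real.rpow_sub hb, Real.rpow_natCast, Real.rpow_natCast,
      div_mul_div_comm, Real.mul_rpow ha.le hb.le, div_eq_mul_inv, mul_inv]
  have hRHS : 2 * (1 - |x|) ^ (s - ((i + j : ℕ) : ℝ))
      = 2 * (t ^ s * (t ^ (i + j))⁻¹) := by
    rw [Real.rpow_sub ht, Real.rpow_natCast]
    ring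
  rw [hLHS, hRHS]
  have h1 : (a * b) ^ s ≤ 2 * t ^ s := by
    calc (a * b) ^ s ≤ (2 * t) ^ s :=
          Real.rpow_le_rpow (mul_pos ha hb).le hab hs0.le
    _ = 2 ^ s * t ^ s := Real.mul_rpow (by norm_num) ht.le
    _ ≤ 2 * t ^ s := by
        have h2 : (2:ℝ) ^ s ≤ 2 ^ (1:ℝ) :=
          Real.rpow_le_rpow_of_exponent_le one_le_two hs1.le
        rw [Real.rpow_one] at h2
        exact mul_le_mul_of_nonneg_right h2 (Real.rpow_nonneg ht.le s)
  have h2 : (a ^ i * b ^ j)⁻¹ ≤ (t ^ (i + j))⁻¹ := by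
    have hle : t ^ (i + j) ≤ a ^ i * b ^ j := by
      rw [pow_add]
      exact mul_le_mul (pow_le_pow_left₀ ht.le hta i) (pow_le_pow_left₀ ht.le htb j)
        (pow_nonneg ht.le j) (pow_nonneg ha.le i)
    exact inv_anti₀ (pow_pos ht _) hle
  calc (a * b) ^ s * (a ^ i * b ^ j)⁻¹ ≤ (2 * t ^ s) * (t ^ (i + j))⁻¹ :=
        mul_le_mul h1 h2 (inv_nonneg.2 (by positivity)) (by positivity)
  _ = 2 * (t ^ s * (t ^ (i + j))⁻¹) := by ring

/-- The absolute value of the constant factor in `uExact`. -/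
noncomputable def Kc (s : ℝ) : ℝ :=
  |2 ^ (-2 * s) * Real.sqrt Real.pi / (Real.Gamma (s + 1 / 2) * Real.Gamma (1 + s))|

lemma pointwise_bound (s : ℝ) (hs0 : 0 < s) (hs1 : s < 1) (p : ℕ) {x : ℝ}
    (hx : x ∈ Set.Ioo (-1:ℝ) 1) :
    |iteratedDeriv p (uExact s) x|
      ≤ (Kc s + 1) * 2 * 2 ^ p * p.factorial * (1 - |x|) ^ (s - (p:ℝ)) := by
  set S : Set ℝ := Set.Ioo (-1:ℝ) 1 with hS
  set c : ℝ := 2 ^ (-2 * s) * Real.sqrt Real.pi /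
      (Real.Gamma (s + 1 / 2) * Real.Gamma (1 + s)) with hc
  have hUD : UniqueDiffOn ℝ S := isOpen_Ioo.uniqueDiffOn
  have hfa := contDiffOn_fa s
  have hfb := contDiffOn_fb s
  have hfab : ContDiffOn ℝ ⊤ (fun y : ℝ => (1 - y) ^ s * (1 + y) ^ s) S := hfa.mul hfb
  -- uExact agrees with the split product on S
  have hEq : Set.EqOn (uExact s) (fun y : ℝ => c * ((1 - y) ^ s * (1 + y) ^ s)) S := by
    intro y hy
    have h1 : (0:ℝ) ≤ 1 - y := by have := hy.2; linarith
    have h2 : (0:ℝ) ≤ 1 + y := by have := hy.1; linarith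
    have : (1 : ℝ) - y ^ 2 = (1 - y) * (1 + y) := by ring
    simp only [uExact, this, Real.mul_rpow h1 h2, hc]
  have step1 : iteratedDeriv p (uExact s) x
      = c * iteratedDerivWithin p (fun y : ℝ => (1 - y) ^ s * (1 + y) ^ s) S x := by
    rw [hEq.iteratedDeriv_of_isOpen isOpen_Ioo p hx,
      iteratedDeriv_eq_within isOpen_Ioo hx p,
      iteratedDerivWithin_const_mul hx hUD c ((hfab.of_le le_top) x hx)]
  have hx1 : (0:ℝ) < 1 - x := by have := hx.2; linarith
  have hx2 : (0:ℝ) < 1 + x := by have := hx.1; linarith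
  have ht : (0:ℝ) < 1 - |x| := by
    have := abs_lt.2 ⟨hx.1, hx.2⟩; linarith
  -- product rule bound
  have step2 : |iteratedDerivWithin p (fun y : ℝ => (1 - y) ^ s * (1 + y) ^ s) S x|
      ≤ ∑ i ∈ Finset.range (p + 1), (p.choose i : ℝ)
          * |iteratedDerivWithin i (fun y : ℝ => (1 - y) ^ s) S x|
          * |iteratedDerivWithin (p - i) (fun y : ℝ => (1 + y) ^ s) S x| := by
    have := norm_iteratedFDerivWithin_mul_le (𝕜 := ℝ)
      (f := fun y : ℝ => (1 - y) ^ s) (g := fun y : ℝ => (1 + y) ^ s)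
      (N := ⊤) hfa hfb hUD hx (n := p) le_top
    simpa only [norm_iteratedFDerivWithin_eq_norm_iteratedDerivWithin, Real.norm_eq_abs]
      using this
  have step3 : ∀ i ∈ Finset.range (p + 1), (p.choose i : ℝ)
          * |iteratedDerivWithin i (fun y : ℝ => (1 - y) ^ s) S x|
          * |iteratedDerivWithin (p - i) (fun y : ℝ => (1 + y) ^ s) S x|
        ≤ (p.factorial : ℝ) * (2 * (1 - |x|) ^ (s - (p:ℝ))) := by
    intro i hi
    have hip : i ≤ p := Nat.lt_succ_iff.mp (Finset.mem_range.mp hi)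
    have e1 : |iteratedDerivWithin i (fun y : ℝ => (1 - y) ^ s) S x|
        ≤ (i.factorial : ℝ) * (1 - x) ^ (s - (i:ℝ)) := by
      rw [iter_fa s i hx, abs_mul, abs_of_pos (Real.rpow_pos_of_pos hx1 _)]
      exact mul_le_mul_of_nonneg_right (abs_aseq_le s hs0 hs1 i)
        (Real.rpow_pos_of_pos hx1 _).le
    have e2 : |iteratedDerivWithin (p - i) (fun y : ℝ => (1 + y) ^ s) S x|
        ≤ ((p - i).factorial : ℝ) * (1 + x) ^ (s - ((p - i : ℕ):ℝ)) := by
      rw [iter_fb s (p - i) hx, abs_mul, abs_of_pos (Real.rpow_pos_of_pos hx2 _)]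
      exact mul_le_mul_of_nonneg_right (abs_bseq_le s hs0 hs1 (p - i))
        (Real.rpow_pos_of_pos hx2 _).le
    have e3 : (1 - x) ^ (s - (i:ℝ)) * (1 + x) ^ (s - ((p - i : ℕ):ℝ))
        ≤ 2 * (1 - |x|) ^ (s - (p:ℝ)) := by
      have := term_bound s hs0 hs1 ⟨hx.1, hx.2⟩ i (p - i)
      rwa [Nat.add_sub_cancel' hip] at this
    have hfact : (p.choose i : ℝ) * (i.factorial : ℝ) * ((p - i).factorial : ℝ)
        = (p.factorial : ℝ) := by
      rw [← Nat.cast_mul, ← Nat.cast_mul, Nat.choose_mul_factorial_mul_factorial hip]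
    calc (p.choose i : ℝ)
          * |iteratedDerivWithin i (fun y : ℝ => (1 - y) ^ s) S x|
          * |iteratedDerivWithin (p - i) (fun y : ℝ => (1 + y) ^ s) S x|
        ≤ (p.choose i : ℝ) * ((i.factorial : ℝ) * (1 - x) ^ (s - (i:ℝ)))
          * (((p - i).factorial : ℝ) * (1 + x) ^ (s - ((p - i : ℕ):ℝ))) := by
          apply mul_le_mul
          · exact mul_le_mul_of_nonneg_left e1 (Nat.cast_nonneg _)
          · exact e2
          · exact abs_nonneg _
          · positivity
    _ = ((p.choose i : ℝ) * (i.factorial : ℝ) * ((p - i).factorial : ℝ))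
          * ((1 - x) ^ (s - (i:ℝ)) * (1 + x) ^ (s - ((p - i : ℕ):ℝ))) := by ring
    _ ≤ (p.factorial : ℝ) * (2 * (1 - |x|) ^ (s - (p:ℝ))) := by
          rw [hfact]
          exact mul_le_mul_of_nonneg_left e3 (Nat.cast_nonneg _)
  have step4 : |iteratedDerivWithin p (fun y : ℝ => (1 - y) ^ s * (1 + y) ^ s) S x|
      ≤ ((p:ℝ) + 1) * ((p.factorial : ℝ) * (2 * (1 - |x|) ^ (s - (p:ℝ)))) := by
    calc |iteratedDerivWithin p (fun y : ℝ => (1 - y) ^ s * (1 + y) ^ s) S x|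
        ≤ ∑ i ∈ Finset.range (p + 1), (p.choose i : ℝ)
          * |iteratedDerivWithin i (fun y : ℝ => (1 - y) ^ s) S x|
          * |iteratedDerivWithin (p - i) (fun y : ℝ => (1 + y) ^ s) S x| := step2
    _ ≤ ∑ _i ∈ Finset.range (p + 1),
          (p.factorial : ℝ) * (2 * (1 - |x|) ^ (s - (p:ℝ))) := Finset.sum_le_sum step3
    _ = ((p:ℝ) + 1) * ((p.factorial : ℝ) * (2 * (1 - |x|) ^ (s - (p:ℝ)))) := by
          rw [Finset.sum_const, Finset.card_range]
          push_cast
          ring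
  have hp2 : ((p:ℝ) + 1) ≤ 2 ^ p := by
    have := Nat.lt_two_pow_self (n := p)
    exact_mod_cast Nat.succ_le_of_lt this
  have hKc : |c| = Kc s := rfl
  calc |iteratedDeriv p (uExact s) x|
      = |c| * |iteratedDerivWithin p (fun y : ℝ => (1 - y) ^ s * (1 + y) ^ s) S x| := by
        rw [step1, abs_mul]
  _ ≤ (Kc s + 1) * (((p:ℝ) + 1) * ((p.factorial : ℝ) * (2 * (1 - |x|) ^ (s - (p:ℝ))))) := by
        apply mul_le_mul
        · rw [hKc]; linarith
        · exact step4
        · exact abs_nonneg _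
        · have : (0:ℝ) ≤ Kc s := abs_nonneg _
          linarith
  _ ≤ (Kc s + 1) * ((2:ℝ) ^ p * ((p.factorial : ℝ) * (2 * (1 - |x|) ^ (s - (p:ℝ))))) := by
        apply mul_le_mul_of_nonneg_left _ (by have : (0:ℝ) ≤ Kc s := abs_nonneg _; linarith)
        exact mul_le_mul_of_nonneg_right hp2 (by positivity)
  _ = (Kc s + 1) * 2 * 2 ^ p * p.factorial * (1 - |x|) ^ (s - (p:ℝ)) := by ring

end ExactAux

/-- Weighted analytic regularity of the exact solution: for every `ε > 0` there are
`C, γ > 0` with `‖r^{p-1/2-s+ε} u^{(p)}‖_{L²(-1,1)} ≤ C γ^p p!` for all `p`. -/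
theorem exact_solution_weighted_analytic (s : ℝ) (hs : s ∈ Set.Ioo (0 : ℝ) 1)
    (ε : ℝ) (hε : 0 < ε) :
    ∃ C > (0 : ℝ), ∃ γ > (0 : ℝ), ∀ p : ℕ,
      (∫ x in Set.Ioo (-1 : ℝ) 1,
          (1 - |x|) ^ (2 * ((p : ℝ) - 1 / 2 - s + ε)) * (iteratedDeriv p (uExact s) x) ^ 2)
            ^ ((1 : ℝ) / 2)
        ≤ C * γ ^ p * Nat.factorial p := by
  obtain ⟨hs0, hs1⟩ := hs
  classical
  set K : ℝ := ExactAux.Kc s + 1 with hK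
  have hKpos : 0 < K := by
    have : (0:ℝ) ≤ ExactAux.Kc s := abs_nonneg _
    simp [hK]; linarith
  -- the comparison function
  set h0 : ℝ → ℝ := fun x => (1 - x) ^ (2 * ε - 1) + (1 + x) ^ (2 * ε - 1) with hh0
  have hh0nonneg : ∀ x ∈ Set.Ioo (-1:ℝ) 1, 0 ≤ h0 x := by
    intro x hx
    have h1 : (0:ℝ) ≤ 1 - x := by have := hx.2; linarith
    have h2 : (0:ℝ) ≤ 1 + x := by have := hx.1; linarith
    exact add_nonneg (Real.rpow_nonneg h1 _) (Real.rpow_nonneg h2 _)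
  -- integrability of the comparison function
  have hInth0 : IntegrableOn h0 (Set.Ioo (-1:ℝ) 1) volume := by
    have hr : (-1:ℝ) < 2 * ε - 1 := by linarith
    have hbase := intervalIntegral.intervalIntegrable_rpow' (a := (0:ℝ)) (b := (2:ℝ)) hr
    have h1 : IntervalIntegrable (fun x : ℝ => (1 - x) ^ (2 * ε - 1)) volume (-1) 1 := by
      have h := (hbase.comp_sub_left 1).symm
      norm_num at h
      exact h
    have h2 : IntervalIntegrable (fun x : ℝ => (1 + x) ^ (2 * ε - 1)) volume (-1) 1 := by
      have h := hbase.comp_add_left 1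
      norm_num at h
      exact h
    have h3 := h1.add h2
    rw [intervalIntegrable_iff, Set.uIoc_of_le (by norm_num : (-1:ℝ) ≤ 1)] at h3
    exact h3.mono_set Set.Ioo_subset_Ioc_self
  set A : ℝ := ∫ x in Set.Ioo (-1:ℝ) 1, h0 x with hA
  have hAnonneg : 0 ≤ A := setIntegral_nonneg measurableSet_Ioo hh0nonneg
  refine ⟨K * 2 * (Real.sqrt A + 1), by positivity, 2, by norm_num, fun p => ?_⟩
  set B : ℝ := K * 2 * 2 ^ p * p.factorial with hB
  have hBpos : 0 < B := by positivity
  -- pointwise bound of the integrand on Ioo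
  have hpt : ∀ x ∈ Set.Ioo (-1:ℝ) 1,
      (1 - |x|) ^ (2 * ((p : ℝ) - 1 / 2 - s + ε)) * (iteratedDeriv p (uExact s) x) ^ 2
        ≤ B ^ 2 * h0 x := by
    intro x hx
    have ht : (0:ℝ) < 1 - |x| := by
      have := abs_lt.2 ⟨hx.1, hx.2⟩; linarith
    have hb := ExactAux.pointwise_bound s hs0 hs1 p hx
    have hsq : (iteratedDeriv p (uExact s) x) ^ 2
        ≤ (B * (1 - |x|) ^ (s - (p:ℝ))) ^ 2 := by
      have h1 : |iteratedDeriv p (uExact s) x| ≤ B * (1 - |x|) ^ (s - (p:ℝ)) := hb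
      calc (iteratedDeriv p (uExact s) x) ^ 2 = |iteratedDeriv p (uExact s) x| ^ 2 :=
            (sq_abs _).symm
      _ ≤ (B * (1 - |x|) ^ (s - (p:ℝ))) ^ 2 :=
            pow_le_pow_left₀ (abs_nonneg _) h1 2
    have hexp : (1 - |x|) ^ (2 * ((p : ℝ) - 1 / 2 - s + ε))
          * ((1 - |x|) ^ (s - (p:ℝ))) ^ 2 = (1 - |x|) ^ (2 * ε - 1) := by
      rw [sq, ← Real.rpow_add ht, ← Real.rpow_add ht]
      congr 1
      ring
    have hw : (0:ℝ) ≤ (1 - |x|) ^ (2 * ((p : ℝ) - 1 / 2 - s + ε)) :=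
      Real.rpow_nonneg ht.le _
    calc (1 - |x|) ^ (2 * ((p : ℝ) - 1 / 2 - s + ε)) * (iteratedDeriv p (uExact s) x) ^ 2
        ≤ (1 - |x|) ^ (2 * ((p : ℝ) - 1 / 2 - s + ε))
            * (B * (1 - |x|) ^ (s - (p:ℝ))) ^ 2 := mul_le_mul_of_nonneg_left hsq hw
    _ = B ^ 2 * ((1 - |x|) ^ (2 * ((p : ℝ) - 1 / 2 - s + ε))
            * ((1 - |x|) ^ (s - (p:ℝ))) ^ 2) := by ring
    _ = B ^ 2 * (1 - |x|) ^ (2 * ε - 1) := by rw [hexp]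
    _ ≤ B ^ 2 * h0 x := by
        apply mul_le_mul_of_nonneg_left _ (sq_nonneg B)
        rcases le_or_gt 0 x with hx0 | hx0
        · rw [abs_of_nonneg hx0]
          exact le_add_of_nonneg_right (Real.rpow_nonneg (by have := hx.1; linarith) _)
        · rw [abs_of_neg hx0]
          simp only [hh0, sub_neg_eq_add]
          exact le_add_of_nonneg_left (Real.rpow_nonneg (by have := hx.2; linarith) _)
  -- measurability of the integrand on Ioo
  set g : ℝ → ℝ := fun x =>
      (1 - |x|) ^ (2 * ((p : ℝ) - 1 / 2 - s + ε)) * (iteratedDeriv p (uExact s) x) ^ 2 with hg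
  have hgnonneg : ∀ x ∈ Set.Ioo (-1:ℝ) 1, 0 ≤ g x := by
    intro x hx
    have ht : (0:ℝ) < 1 - |x| := by
      have := abs_lt.2 ⟨hx.1, hx.2⟩; linarith
    exact mul_nonneg (Real.rpow_nonneg ht.le _) (sq_nonneg _)
  have hgcont : ContinuousOn g (Set.Ioo (-1:ℝ) 1) := by
    apply ContinuousOn.mul
    · intro x hx
      have ht' : (1:ℝ) - |x| ≠ 0 := by
        have h := abs_lt.2 ⟨hx.1, hx.2⟩; intro hc; linarith
      exact (((continuous_const.sub continuous_abs).continuousAt).rpow_const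
        (Or.inl ht')).continuousWithinAt
    · apply ContinuousOn.pow
      -- iteratedDeriv agrees with iteratedDerivWithin on the open set
      have hEq : Set.EqOn (iteratedDeriv p (uExact s))
          (iteratedDerivWithin p (uExact s) (Set.Ioo (-1:ℝ) 1)) (Set.Ioo (-1:ℝ) 1) :=
        fun x hx => (ExactAux.iteratedDeriv_eq_within isOpen_Ioo hx p)
      apply ContinuousOn.congr _ hEq
      have hCD : ContDiffOn ℝ ⊤ (uExact s) (Set.Ioo (-1:ℝ) 1) := by
        intro x hx
        have hne : (1:ℝ) - x ^ 2 ≠ 0 := by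
          have h1 : (0:ℝ) < 1 - x := by have := hx.2; linarith
          have h2 : (0:ℝ) < 1 + x := by have := hx.1; linarith
          have : (1:ℝ) - x ^ 2 = (1 - x) * (1 + x) := by ring
          rw [this]; positivity
        have hinner : ContDiffAt ℝ ⊤ (fun y : ℝ => (1 - y ^ 2) ^ s) x :=
          ContDiffAt.comp x (Real.contDiffAt_rpow_const_of_ne hne)
            ((contDiff_const.sub (contDiff_id.pow 2)).contDiffAt)
        exact (contDiffAt_const.mul hinner).contDiffWithinAt
      exact hCD.continuousOn_iteratedDerivWithin le_top isOpen_Ioo.uniqueDiffOn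
  have hgmeas : AEStronglyMeasurable g (volume.restrict (Set.Ioo (-1:ℝ) 1)) :=
    hgcont.aestronglyMeasurable measurableSet_Ioo
  -- integrability of g via domination
  have hbound_int : IntegrableOn (fun x => B ^ 2 * h0 x) (Set.Ioo (-1:ℝ) 1) volume :=
    hInth0.const_mul _
  have hgae : ∀ᵐ x ∂(volume.restrict (Set.Ioo (-1:ℝ) 1)), ‖g x‖ ≤ B ^ 2 * h0 x := by
    rw [ae_restrict_iff' measurableSet_Ioo]
    filter_upwards with x hx
    rw [Real.norm_eq_abs, abs_of_nonneg (hgnonneg x hx)]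
    exact hpt x hx
  have hgint : IntegrableOn g (Set.Ioo (-1:ℝ) 1) volume :=
    Integrable.mono' hbound_int hgmeas hgae
  -- the integral inequality
  have hIle : ∫ x in Set.Ioo (-1:ℝ) 1, g x ≤ B ^ 2 * A := by
    calc ∫ x in Set.Ioo (-1:ℝ) 1, g x
        ≤ ∫ x in Set.Ioo (-1:ℝ) 1, B ^ 2 * h0 x :=
          setIntegral_mono_on hgint hbound_int measurableSet_Ioo hpt
    _ = B ^ 2 * A := by rw [MeasureTheory.integral_const_mul]
  have hInonneg : 0 ≤ ∫ x in Set.Ioo (-1:ℝ) 1, g x :=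
    setIntegral_nonneg measurableSet_Ioo hgnonneg
  calc (∫ x in Set.Ioo (-1:ℝ) 1, g x) ^ ((1:ℝ)/2)
      ≤ (B ^ 2 * A) ^ ((1:ℝ)/2) := Real.rpow_le_rpow hInonneg hIle (by norm_num)
  _ = Real.sqrt (B ^ 2 * A) := (Real.sqrt_eq_rpow _).symm
  _ = Real.sqrt (B ^ 2) * Real.sqrt A := Real.sqrt_mul (sq_nonneg B) A
  _ = B * Real.sqrt A := by rw [Real.sqrt_sq hBpos.le]
  _ ≤ B * (Real.sqrt A + 1) := by
      apply mul_le_mul_of_nonneg_left _ hBpos.le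
      linarith
  _ = (K * 2 * (Real.sqrt A + 1)) * 2 ^ p * p.factorial := by rw [hB]; ring
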